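/- There do not exist real constants μ, ν, β, λ, a nonempty open interval I ⊆ ℝ, and differentiable functions a, z : I → ℝ with z nowhere zero and z′ nowhere zero on I, such that for all v ∈ I: a′(v) = μ/z(v) + ν; −β·a′(v) − μβ/z(v) + μ·z(v) = λ; and −β·a(v)² = 1 − v². -/

import Mathlib

/-- the overdetermined ODE system (az1) with `γ = 0` has no
solutions with `z` and `z'` nowhere zero. -/
theorem az1_gamma_zero_no_solution :
    ¬ ∃ (μ ν β lam : ℝ) (I : Set ℝ) (a z : ℝ → ℝ),
      IsOpen I ∧ I.OrdConnected ∧ I.Nonempty ∧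
      (∀ v ∈ I, DifferentiableAt ℝ a v) ∧
      (∀ v ∈ I, DifferentiableAt ℝ z v) ∧
      (∀ v ∈ I, z v ≠ 0) ∧
      (∀ v ∈ I, deriv z v ≠ 0) ∧
      (∀ v ∈ I, deriv a v = μ / z v + ν) ∧
      (∀ v ∈ I, -β * deriv a v - μ * β / z v + μ * z v = lam) ∧
      (∀ v ∈ I, -β * (a v)^2 = 1 - v^2) := by
  rintro ⟨μ, ν, β, lam, I, a, z, hIopen, -, ⟨v₀, hv₀⟩, ha, hz, hz0, hz'0, h1, h2, h3⟩
  -- From differentiating eq3 : β * a * a' = v on I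
  have key : ∀ v ∈ I, β * a v * deriv a v = v := by
    intro v hv
    have hfg : (fun v => -β * (a v)^2) =ᶠ[nhds v] (fun v => 1 - v^2) :=
      Filter.eventually_of_mem (hIopen.mem_nhds hv) h3
    have hF : HasDerivAt (fun v => -β * (a v)^2)
        (-β * (2 * a v * deriv a v)) v := by
      have := ((ha v hv).hasDerivAt.pow 2).const_mul (-β)
      simpa [mul_comm, mul_assoc, mul_left_comm] using this
    have hG : HasDerivAt (fun v : ℝ => 1 - v^2) (-(2*v)) v := by
      have := (hasDerivAt_pow 2 v).const_sub 1
      simpa using this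
    have h0 := hfg.deriv_eq
    rw [hF.deriv, hG.deriv] at h0
    nlinarith [h0]
  -- eq2 with eq1 substituted : μ z - 2 μ β / z = lam + β ν on I
  have key2 : ∀ v ∈ I, μ * z v - 2*μ*β / z v = lam + β * ν := by
    intro v hv
    have e2 := h2 v hv
    rw [h1 v hv] at e2
    have hzv := hz0 v hv
    field_simp at e2 ⊢
    have hc : (μ * z v * z v - 2*μ*β - (lam + β*ν) * z v) * z v = 0 := by
      linear_combination z v * e2
    have := (mul_eq_zero.mp hc).resolve_right hzv
    linarith [this]
  -- differentiate key2 : μ (z² + 2β) = 0 on I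
  have key4 : ∀ v ∈ I, μ * ((z v)^2 + 2*β) = 0 := by
    intro v hv
    have hzv := hz0 v hv
    have hz'v := hz'0 v hv
    have hfg : (fun v => μ * z v - 2*μ*β / z v) =ᶠ[nhds v] (fun _ => lam + β * ν) :=
      Filter.eventually_of_mem (hIopen.mem_nhds hv) key2
    have hF : HasDerivAt (fun v => μ * z v - 2*μ*β / z v)
        (μ * deriv z v - (0 * z v - (2*μ*β) * deriv z v) / (z v)^2) v :=
      ((hz v hv).hasDerivAt.const_mul μ).sub
        ((hasDerivAt_const v (2*μ*β)).div (hz v hv).hasDerivAt hzv)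
    have h0 := hfg.deriv_eq
    rw [hF.deriv, deriv_const] at h0
    have hmain : μ * deriv z v * ((z v)^2 + 2*β) = 0 := by
      have hzsq : (z v)^2 ≠ 0 := pow_ne_zero 2 hzv
      field_simp at h0
      nlinarith [h0]
    rcases mul_eq_zero.mp hmain with h | h
    · rcases mul_eq_zero.mp h with h' | h'
      · rw [h']; ring
      · exact absurd h' hz'v
    · rw [h]; ring
  by_cases hμ : μ = 0
  · -- μ = 0 : a' = ν, so β ν a v = v on I
    have ha' : ∀ v ∈ I, deriv a v = ν := by
      intro v hv; rw [h1 v hv, hμ]; simp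
    have keyA : ∀ v ∈ I, β * ν * a v = v := by
      intro v hv
      have hk := key v hv
      rw [ha' v hv] at hk
      linarith [hk]
    have hfg : (fun v => β * ν * a v) =ᶠ[nhds v₀] (fun v => v) :=
      Filter.eventually_of_mem (hIopen.mem_nhds hv₀) keyA
    have hF : HasDerivAt (fun v => β * ν * a v) (β * ν * deriv a v₀) v₀ :=
      (ha v₀ hv₀).hasDerivAt.const_mul (β*ν)
    have h0 := hfg.deriv_eq
    rw [hF.deriv, deriv_id''] at h0
    rw [ha' v₀ hv₀] at h0
    -- h0 : β * ν * ν = 1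
    have e3 := h3 v₀ hv₀
    have eA := keyA v₀ hv₀
    simp only at h0
    have h1' : (β * ν * a v₀)^2 = v₀^2 := by rw [eA]
    have hsq : β * (a v₀)^2 = v₀^2 := by
      linear_combination h1' - β*(a v₀)^2*h0
    nlinarith [e3, hsq]
  · -- μ ≠ 0 : z² = -2β constant, contradicting z' ≠ 0
    have hzsq : ∀ v ∈ I, (z v)^2 = -(2*β) := by
      intro v hv
      rcases mul_eq_zero.mp (key4 v hv) with h | h
      · exact absurd h hμ
      · linarith
    have hfg : (fun v => (z v)^2) =ᶠ[nhds v₀] (fun _ => -(2*β)) :=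
      Filter.eventually_of_mem (hIopen.mem_nhds hv₀) hzsq
    have hF : HasDerivAt (fun v => (z v)^2) (2 * z v₀ * deriv z v₀) v₀ := by
      have := (hz v₀ hv₀).hasDerivAt.pow 2
      simp at this; exact this
    have h0 := hfg.deriv_eq
    rw [hF.deriv, deriv_const] at h0
    exact (mul_ne_zero (mul_ne_zero two_ne_zero (hz0 v₀ hv₀)) (hz'0 v₀ hv₀)) h0
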